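/- Let C be a d-variate copula with induced probability measure μ, and for each k ∈ {1,...,d} let 0 = x_0^k < x_1^k < ... < x_m^k = 1 be a partition of [0,1]. For i = (i_1,...,i_d) ∈ {1,...,m}^d let R_i be the corresponding grid box and μ_i = μ(R_i), and define q_i^k = x_{i_k−1}^k + Σ{μ_j : j <_lex i, j_k = i_k}, where <_lex is the lexicographic order on d-tuples. Then for each k ∈ {1,...,d} and each fixed p ∈ {1,...,m}, the intervals J_i^k = [q_i^k, q_i^k + μ_i] over all i with i_k = p have pairwise disjoint interiors, their union is [x_{p−1}^k, x_p^k], and consequently the union over all i ∈ {1,...,m}^d of the intervals J_i^k equals [0,1]. -/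

import Mathlib

open scoped Classical

/-- Strict lexicographic order on `d`-tuples. -/
def lexLt {d m : ℕ} (a b : Fin d → Fin m) : Prop :=
  ∃ k : Fin d, (∀ l : Fin d, l < k → a l = b l) ∧ a k < b k

lemma lexLt_trans {d m : ℕ} {a b c : Fin d → Fin m} (h1 : lexLt a b) (h2 : lexLt b c) :
    lexLt a c := by
  obtain ⟨k1, he1, hl1⟩ := h1
  obtain ⟨k2, he2, hl2⟩ := h2
  rcases lt_trichotomy k1 k2 with h | h | h
  · exact ⟨k1, fun l hl => (he1 l hl).trans (he2 l (hl.trans h)), (he2 k1 h) ▸ hl1⟩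
  · exact ⟨k1, fun l hl => (he1 l hl).trans (he2 l (h ▸ hl)), hl1.trans (h ▸ hl2)⟩
  · exact ⟨k2, fun l hl => (he1 l (hl.trans h)).trans (he2 l hl), (he1 k2 h) ▸ hl2⟩

lemma lexLt_irrefl {d m : ℕ} (a : Fin d → Fin m) : ¬ lexLt a a := by
  rintro ⟨k, -, hk⟩; exact lt_irrefl _ hk

lemma lexLt_trichotomy {d m : ℕ} {a b : Fin d → Fin m} (h : a ≠ b) :
    lexLt a b ∨ lexLt b a := by
  have hS : (Finset.univ.filter (fun k : Fin d => a k ≠ b k)).Nonempty := by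
    by_contra hc
    rw [Finset.not_nonempty_iff_eq_empty] at hc
    apply h; funext k
    by_contra hk
    have : k ∈ Finset.univ.filter (fun k : Fin d => a k ≠ b k) := by simp [hk]
    simp [hc] at this
  set k := (Finset.univ.filter (fun k : Fin d => a k ≠ b k)).min' hS with hkdef
  have hk : a k ≠ b k := by
    have := (Finset.univ.filter (fun k : Fin d => a k ≠ b k)).min'_mem hS
    simpa using this
  have heq : ∀ l : Fin d, l < k → a l = b l := by
    intro l hl
    by_contra hc
    have : k ≤ l := Finset.min'_le _ _ (by simp [hc])
    exact absurd hl (not_lt.mpr this)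
  rcases lt_or_gt_of_ne hk with h' | h'
  · exact Or.inl ⟨k, heq, h'⟩
  · exact Or.inr ⟨k, fun l hl => (heq l hl).symm, h'⟩

lemma exists_rmax {α : Type*} (r : α → α → Prop)
    (htrans : ∀ {a b c}, r a b → r b c → r a c)
    (hirr : ∀ a, ¬ r a a) (s : Finset α) (hs : s.Nonempty) :
    ∃ a ∈ s, ∀ b ∈ s, ¬ r a b := by
  induction hs using Finset.Nonempty.cons_induction with
  | singleton a =>
    refine ⟨a, Finset.mem_singleton_self a, ?_⟩
    intro b hb
    rw [Finset.mem_singleton] at hb; subst hb; exact hirr _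
  | cons c t hct htne ih =>
    obtain ⟨a, ha, hamax⟩ := ih
    by_cases hac : r a c
    · refine ⟨c, Finset.mem_cons_self c t, ?_⟩
      intro b hb hcb
      rcases Finset.mem_cons.mp hb with rfl | hb
      · exact hirr _ hcb
      · exact hamax b hb (htrans hac hcb)
    · refine ⟨a, Finset.mem_cons.mpr (Or.inr ha), ?_⟩
      intro b hb
      rcases Finset.mem_cons.mp hb with rfl | hb
      · exact hac
      · exact hamax b hb

lemma pack_union {α : Type*} (r : α → α → Prop)
    (htrans : ∀ {a b c}, r a b → r b c → r a c)
    (hirr : ∀ a, ¬ r a a)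
    (htri : ∀ a b : α, a ≠ b → r a b ∨ r b a)
    (f : α → ℝ) (hf : ∀ a, 0 ≤ f a) :
    ∀ (s : Finset α), s.Nonempty → ∀ (c : ℝ) (Q : α → ℝ),
      (∀ a ∈ s, Q a = c + ∑ b ∈ s.filter (fun b => r b a), f b) →
      (⋃ a ∈ s, Set.Icc (Q a) (Q a + f a)) = Set.Icc c (c + ∑ b ∈ s, f b) := by
  intro s
  induction s using Finset.strongInduction with
  | _ s ih =>
    intro hs c Q hQ
    obtain ⟨a, ha, hamax⟩ := exists_rmax r @htrans hirr s hs
    have hins : s = insert a (s.erase a) := (Finset.insert_erase ha).symm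
    have hfa : s.filter (fun b => r b a) = s.erase a := by
      ext j
      simp only [Finset.mem_filter, Finset.mem_erase]
      constructor
      · rintro ⟨hj, hr⟩
        refine ⟨?_, hj⟩
        rintro rfl; exact absurd hr (hirr _)
      · rintro ⟨hne, hj⟩
        refine ⟨hj, ?_⟩
        rcases htri j a hne with h | h
        · exact h
        · exact absurd h (hamax j hj)
    have hfb : ∀ b ∈ s.erase a,
        s.filter (fun u => r u b) = (s.erase a).filter (fun u => r u b) := by
      intro b hb
      ext j
      simp only [Finset.mem_filter, Finset.mem_erase]
      constructor
      · rintro ⟨hj, hr⟩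
        refine ⟨⟨?_, hj⟩, hr⟩
        rintro rfl
        exact hamax b (Finset.mem_of_mem_erase hb) hr
      · rintro ⟨⟨_, hj⟩, hr⟩
        exact ⟨hj, hr⟩
    have hanot : a ∉ s.erase a := Finset.notMem_erase a s
    have hQa : Q a = c + ∑ b ∈ s.erase a, f b := by rw [hQ a ha, hfa]
    have htnn : 0 ≤ ∑ b ∈ s.erase a, f b := Finset.sum_nonneg fun b _ => hf b
    rcases (s.erase a).eq_empty_or_nonempty with hte | htne
    · have hQa' : Q a = c := by rw [hQa, hte]; simp
      rw [hins, hte, Finset.set_biUnion_insert, hQa',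
        Finset.sum_insert (Finset.notMem_empty a)]
      simp
    · have httt : s.erase a ⊂ s := Finset.erase_ssubset ha
      have hIH := ih (s.erase a) httt htne c Q
        (fun b hb => by rw [hQ b (Finset.mem_of_mem_erase hb), hfb b hb])
      rw [hins, Finset.set_biUnion_insert, Finset.sum_insert hanot]
      rw [hIH, hQa, Set.union_comm]
      rw [Set.Icc_union_Icc_eq_Icc (by linarith) (by linarith [hf a])]
      ring_nf

/-- packing the masses of the grid boxes of a copula measure
lexicographically produces, in each coordinate slab `[x_{p-1}^k, x_p^k]`, intervals
`J_i^k = [q_i^k, q_i^k + μ_i]` with pairwise disjoint interiors whose union is the whole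
slab; the union over all boxes is `[0,1]`. -/
theorem lex_packing_of_copula_masses (d m : ℕ) (hd : 0 < d) (hm : 0 < m)
    (μ : MeasureTheory.Measure (Fin d → ℝ)) [MeasureTheory.IsProbabilityMeasure μ]
    (x : Fin d → ℕ → ℝ)
    (hx0 : ∀ k : Fin d, x k 0 = 0) (hxm : ∀ k : Fin d, x k m = 1)
    (hxlt : ∀ k : Fin d, ∀ p < m, x k p < x k (p + 1))
    (hmarg : ∀ k : Fin d, ∀ s t : ℝ, 0 ≤ s → s ≤ t → t ≤ 1 →
      μ {u : Fin d → ℝ | s < u k ∧ u k ≤ t} = ENNReal.ofReal (t - s))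
    (μr : (Fin d → Fin m) → ℝ)
    (hμr : ∀ i : Fin d → Fin m,
      μr i = (μ {u : Fin d → ℝ | ∀ k, x k (i k : ℕ) < u k ∧ u k ≤ x k ((i k : ℕ) + 1)}).toReal)
    (q : Fin d → (Fin d → Fin m) → ℝ)
    (hq : ∀ (k : Fin d) (i : Fin d → Fin m),
      q k i = x k (i k : ℕ) +
        ∑ j ∈ Finset.univ.filter (fun j : Fin d → Fin m => lexLt j i ∧ j k = i k), μr j) :
    ∀ (k : Fin d) (p : Fin m),
      (∀ i i' : Fin d → Fin m, i k = p → i' k = p → i ≠ i' →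
        Set.Ioo (q k i) (q k i + μr i) ∩ Set.Ioo (q k i') (q k i' + μr i') = ∅) ∧
      (⋃ i ∈ {i : Fin d → Fin m | i k = p}, Set.Icc (q k i) (q k i + μr i)) =
        Set.Icc (x k (p : ℕ)) (x k ((p : ℕ) + 1)) ∧
      (⋃ i : Fin d → Fin m, Set.Icc (q k i) (q k i + μr i)) = Set.Icc (0:ℝ) 1 := by
  -- monotonicity of the partition points
  have hmon : ∀ (l : Fin d) (b : ℕ), b ≤ m → ∀ a : ℕ, a ≤ b → x l a ≤ x l b := by
    intro l b
    induction b with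
    | zero =>
      intro _ a ha
      rw [Nat.le_zero.mp ha]
    | succ n ihn =>
      intro hb a ha
      rcases Nat.eq_or_lt_of_le ha with rfl | hlt
      · exact le_rfl
      · exact (ihn (by omega) a (by omega)).trans (hxlt l n (by omega)).le
  have hμnn : ∀ i, 0 ≤ μr i := fun i => by rw [hμr]; exact ENNReal.toReal_nonneg
  intro k
  -- rewriting q on the slab fibers
  have hqs : ∀ (p' : Fin m) (i : Fin d → Fin m), i k = p' →
      q k i = x k (p' : ℕ) +
        ∑ j ∈ (Finset.univ.filter (fun i : Fin d → Fin m => i k = p')).filter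
          (fun j => lexLt j i), μr j := by
    intro p' i hik
    rw [hq k i, hik]
    congr 1
    apply Finset.sum_congr _ (fun _ _ => rfl)
    ext j
    simp only [Finset.mem_filter, Finset.mem_univ, true_and]
    tauto
  -- separation
  have hsep : ∀ (p' : Fin m) (i i' : Fin d → Fin m), i k = p' → i' k = p' →
      lexLt i i' → q k i + μr i ≤ q k i' := by
    intro p' i i' hi hi' hlt
    rw [hqs p' i hi, hqs p' i' hi']
    have hnotmem : i ∉ (Finset.univ.filter (fun j : Fin d → Fin m => j k = p')).filter
        (fun j => lexLt j i) := by
      simp only [Finset.mem_filter]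
      rintro ⟨-, hr⟩
      exact lexLt_irrefl i hr
    have hsub : insert i ((Finset.univ.filter (fun j : Fin d → Fin m => j k = p')).filter
        (fun j => lexLt j i)) ⊆ (Finset.univ.filter (fun j : Fin d → Fin m => j k = p')).filter
        (fun j => lexLt j i') := by
      intro j hj
      rcases Finset.mem_insert.mp hj with rfl | hj
      · simp [hi, hlt]
      · simp only [Finset.mem_filter] at hj ⊢
        exact ⟨hj.1, lexLt_trans hj.2 hlt⟩
    have hle := Finset.sum_le_sum_of_subset_of_nonneg hsub (fun j _ _ => hμnn j)
    rw [Finset.sum_insert hnotmem] at hle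
    linarith
  -- the grid boxes
  set R : (Fin d → Fin m) → Set (Fin d → ℝ) :=
    fun i => {u | ∀ l, x l (i l : ℕ) < u l ∧ u l ≤ x l ((i l : ℕ) + 1)} with hRdef
  have hμrR : ∀ i, μr i = (μ (R i)).toReal := hμr
  have hRmeas : ∀ i, MeasurableSet (R i) := by
    intro i
    have : R i = ⋂ l, (fun u : Fin d → ℝ => u l) ⁻¹'
        Set.Ioc (x l (i l : ℕ)) (x l ((i l : ℕ) + 1)) := by
      ext u
      simp only [hRdef, Set.mem_setOf_eq, Set.mem_iInter, Set.mem_preimage, Set.mem_Ioc]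
    rw [this]
    exact MeasurableSet.iInter fun l => (measurable_pi_apply l) measurableSet_Ioc
  have hIocDisj : ∀ (l : Fin d) (a b : Fin m) (y : ℝ), (a : ℕ) < (b : ℕ) →
      y ≤ x l ((a : ℕ) + 1) → x l (b : ℕ) < y → False := by
    intro l a b y hab h2 h3
    have : x l ((a : ℕ) + 1) ≤ x l (b : ℕ) := hmon l _ b.isLt.le _ (by omega)
    linarith
  have hRdisj : ∀ i j : Fin d → Fin m, i ≠ j → Disjoint (R i) (R j) := by
    intro i j hij
    rw [Set.disjoint_left]
    intro u hui huj
    have hex : ∃ l, i l ≠ j l := by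
      by_contra hc; push_neg at hc; exact hij (funext hc)
    obtain ⟨l, hl⟩ := hex
    have h1 := hui l
    have h2 := huj l
    rcases Nat.lt_or_ge (i l : ℕ) (j l : ℕ) with h | h
    · exact hIocDisj l (i l) (j l) (u l) h h1.2 h2.1
    · have h' : (j l : ℕ) < (i l : ℕ) :=
        lt_of_le_of_ne h (fun e => hl (Fin.ext e.symm))
      exact hIocDisj l (j l) (i l) (u l) h' h2.2 h1.1
  -- coordinates a.e. in (0,1]
  have hG : ∀ l : Fin d, μ {u : Fin d → ℝ | ¬(0 < u l ∧ u l ≤ 1)} = 0 := by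
    intro l
    have h1 : μ {u : Fin d → ℝ | 0 < u l ∧ u l ≤ 1} = 1 := by
      rw [hmarg l 0 1 le_rfl zero_le_one le_rfl]; simp
    have hms : MeasurableSet {u : Fin d → ℝ | 0 < u l ∧ u l ≤ 1} := by
      have : {u : Fin d → ℝ | 0 < u l ∧ u l ≤ 1} =
          (fun u : Fin d → ℝ => u l) ⁻¹' Set.Ioc 0 1 := rfl
      rw [this]
      exact (measurable_pi_apply l) measurableSet_Ioc
    have hcompl : {u : Fin d → ℝ | ¬(0 < u l ∧ u l ≤ 1)} =
        {u : Fin d → ℝ | 0 < u l ∧ u l ≤ 1}ᶜ := rfl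
    rw [hcompl, MeasureTheory.measure_compl hms (MeasureTheory.measure_ne_top μ _), h1]
    simp
  -- locating a point of (0,1] in the partition
  have hfind : ∀ (l : Fin d) (y : ℝ), 0 < y → y ≤ 1 →
      ∃ a : Fin m, x l (a : ℕ) < y ∧ y ≤ x l ((a : ℕ) + 1) := by
    intro l y hy0 hy1
    have hA : ((Finset.range m).filter (fun a => x l a < y)).Nonempty :=
      ⟨0, by simp [Finset.mem_filter, Finset.mem_range, hm, hx0 l, hy0]⟩
    set a := ((Finset.range m).filter (fun a => x l a < y)).max' hA with hadef
    have haA := ((Finset.range m).filter (fun a => x l a < y)).max'_mem hA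
    rw [Finset.mem_filter, Finset.mem_range] at haA
    refine ⟨⟨a, haA.1⟩, haA.2, ?_⟩
    simp only
    by_cases ham : a + 1 = m
    · rw [ham, hxm l]; exact hy1
    · have ham' : a + 1 < m := by omega
      by_contra hc
      push_neg at hc
      have hmem : a + 1 ∈ (Finset.range m).filter (fun a => x l a < y) := by
        rw [Finset.mem_filter, Finset.mem_range]; exact ⟨ham', hc⟩
      have := Finset.le_max' _ _ hmem
      omega
  -- mass of the slab
  have hsum : ∀ p' : Fin m,
      ∑ i ∈ Finset.univ.filter (fun i : Fin d → Fin m => i k = p'), μr i =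
        x k ((p' : ℕ) + 1) - x k (p' : ℕ) := by
    intro p'
    set s := Finset.univ.filter (fun i : Fin d → Fin m => i k = p') with hsdef
    set S := {u : Fin d → ℝ | x k (p' : ℕ) < u k ∧ u k ≤ x k ((p' : ℕ) + 1)} with hSdef
    have hb0 : (0:ℝ) ≤ x k (p' : ℕ) := by
      rw [← hx0 k]; exact hmon k _ p'.isLt.le 0 (Nat.zero_le _)
    have hb1 : x k (p' : ℕ) ≤ x k ((p' : ℕ) + 1) := (hxlt k _ p'.isLt).le
    have hb2 : x k ((p' : ℕ) + 1) ≤ 1 := by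
      rw [← hxm k]; exact hmon k m le_rfl _ p'.isLt
    have hμS : μ S = ENNReal.ofReal (x k ((p' : ℕ) + 1) - x k (p' : ℕ)) :=
      hmarg k _ _ hb0 hb1 hb2
    have hcover : μ (⋃ i ∈ s, R i) = μ S := by
      apply le_antisymm
      · apply MeasureTheory.measure_mono
        intro u hu
        rw [Set.mem_iUnion₂] at hu
        obtain ⟨i, hi, hu⟩ := hu
        have hik : i k = p' := by
          rw [hsdef, Finset.mem_filter] at hi; exact hi.2
        have := hu k
        rw [hik] at this
        exact this
      · have hsub : S ⊆ (⋃ i ∈ s, R i) ∪ ⋃ l, {u : Fin d → ℝ | ¬(0 < u l ∧ u l ≤ 1)} := by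
          intro u huS
          by_cases hall : ∀ l, 0 < u l ∧ u l ≤ 1
          · left
            choose i hi1 hi2 using fun l => hfind l (u l) (hall l).1 (hall l).2
            have hik : i k = p' := by
              by_contra hne
              rcases Nat.lt_or_ge ((i k : ℕ)) ((p' : ℕ)) with h | h
              · exact hIocDisj k (i k) p' (u k) h (hi2 k) huS.1
              · have h' : ((p' : ℕ)) < (i k : ℕ) :=
                  lt_of_le_of_ne h (fun e => hne (Fin.ext e.symm))
                exact hIocDisj k p' (i k) (u k) h' huS.2 (hi1 k)
            rw [Set.mem_iUnion₂]
            refine ⟨i, by simp [hsdef, hik], fun l => ⟨hi1 l, hi2 l⟩⟩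
          · right
            push_neg at hall
            obtain ⟨l, hl⟩ := hall
            rw [Set.mem_iUnion]
            refine ⟨l, ?_⟩
            simp only [Set.mem_setOf_eq]
            rintro ⟨hc1, hc2⟩
            exact absurd hc2 (not_le.mpr (hl hc1))
        calc μ S ≤ μ ((⋃ i ∈ s, R i) ∪ ⋃ l, {u : Fin d → ℝ | ¬(0 < u l ∧ u l ≤ 1)}) :=
              MeasureTheory.measure_mono hsub
          _ ≤ μ (⋃ i ∈ s, R i) + μ (⋃ l, {u : Fin d → ℝ | ¬(0 < u l ∧ u l ≤ 1)}) :=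
              MeasureTheory.measure_union_le _ _
          _ = μ (⋃ i ∈ s, R i) := by
              have hz : μ (⋃ l, {u : Fin d → ℝ | ¬(0 < u l ∧ u l ≤ 1)}) = 0 := by
                refine le_antisymm ?_ zero_le
                calc μ (⋃ l, {u : Fin d → ℝ | ¬(0 < u l ∧ u l ≤ 1)})
                    ≤ ∑' l, μ {u : Fin d → ℝ | ¬(0 < u l ∧ u l ≤ 1)} :=
                      MeasureTheory.measure_iUnion_le _
                  _ = 0 := by simp only [hG, tsum_zero]
              rw [hz, add_zero]
    have hmeasum : μ (⋃ i ∈ s, R i) = ∑ i ∈ s, μ (R i) :=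
      MeasureTheory.measure_biUnion_finset
        (fun i _ j _ hij => hRdisj i j hij) (fun i _ => hRmeas i)
    have hfin : ∀ i ∈ s, μ (R i) ≠ ⊤ := fun i _ => MeasureTheory.measure_ne_top μ _
    calc ∑ i ∈ s, μr i = ∑ i ∈ s, (μ (R i)).toReal := by
          exact Finset.sum_congr rfl fun i _ => hμrR i
      _ = (∑ i ∈ s, μ (R i)).toReal := (ENNReal.toReal_sum hfin).symm
      _ = (μ S).toReal := by rw [← hmeasum, hcover]
      _ = x k ((p' : ℕ) + 1) - x k (p' : ℕ) := by
          rw [hμS, ENNReal.toReal_ofReal (by linarith)]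
  -- the slab tiling
  have hslab : ∀ p' : Fin m,
      (⋃ i ∈ {i : Fin d → Fin m | i k = p'}, Set.Icc (q k i) (q k i + μr i)) =
        Set.Icc (x k (p' : ℕ)) (x k ((p' : ℕ) + 1)) := by
    intro p'
    have hne : (Finset.univ.filter (fun i : Fin d → Fin m => i k = p')).Nonempty :=
      ⟨fun _ => p', by simp⟩
    have hpack := pack_union lexLt (fun {a b c} => lexLt_trans) lexLt_irrefl
      (fun a b hab => lexLt_trichotomy hab) μr hμnn
      (Finset.univ.filter (fun i : Fin d → Fin m => i k = p')) hne
      (x k (p' : ℕ)) (q k)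
      (fun i hi => hqs p' i (by rw [Finset.mem_filter] at hi; exact hi.2))
    rw [hsum p'] at hpack
    have hend : x k (p' : ℕ) + (x k ((p' : ℕ) + 1) - x k (p' : ℕ)) = x k ((p' : ℕ) + 1) := by
      ring
    rw [hend] at hpack
    have hset : {i : Fin d → Fin m | i k = p'} =
        ↑(Finset.univ.filter (fun i : Fin d → Fin m => i k = p')) := by
      ext i; simp
    rw [hset, Finset.set_biUnion_coe]
    exact hpack
  intro p
  refine ⟨?_, hslab p, ?_⟩
  · -- disjoint interiors
    intro i i' hi hi' hne
    have key : ∀ a b : Fin d → Fin m, q k a + μr a ≤ q k b →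
        Set.Ioo (q k a) (q k a + μr a) ∩ Set.Ioo (q k b) (q k b + μr b) = ∅ := by
      intro a b hab
      ext z
      simp only [Set.mem_inter_iff, Set.mem_Ioo, Set.mem_empty_iff_false, iff_false]
      rintro ⟨⟨_, h2⟩, h3, _⟩
      linarith
    rcases lexLt_trichotomy hne with h | h
    · exact key i i' (hsep p i i' hi hi' h)
    · rw [Set.inter_comm]
      exact key i' i (hsep p i' i hi' hi h)
  · -- the full union
    have h1 : (⋃ i : Fin d → Fin m, Set.Icc (q k i) (q k i + μr i)) =
        ⋃ p' : Fin m, ⋃ i ∈ {i : Fin d → Fin m | i k = p'},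
          Set.Icc (q k i) (q k i + μr i) := by
      ext y
      simp only [Set.mem_iUnion, Set.mem_setOf_eq]
      constructor
      · rintro ⟨i, hy⟩; exact ⟨i k, i, rfl, hy⟩
      · rintro ⟨p', i, -, hy⟩; exact ⟨i, hy⟩
    rw [h1]
    rw [Set.iUnion_congr hslab]
    ext y
    simp only [Set.mem_iUnion, Set.mem_Icc]
    constructor
    · rintro ⟨p', hy1, hy2⟩
      constructor
      · refine le_trans ?_ hy1
        rw [← hx0 k]
        exact hmon k _ p'.isLt.le 0 (Nat.zero_le _)
      · refine le_trans hy2 ?_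
        rw [← hxm k]
        exact hmon k m le_rfl _ p'.isLt
    · rintro ⟨h0, h1y⟩
      have hP : (Finset.univ.filter (fun p' : Fin m => x k (p' : ℕ) ≤ y)).Nonempty := by
        refine ⟨⟨0, hm⟩, ?_⟩
        rw [Finset.mem_filter]
        refine ⟨Finset.mem_univ _, ?_⟩
        simp [hx0 k, h0]
      set pm := (Finset.univ.filter (fun p' : Fin m => x k (p' : ℕ) ≤ y)).max' hP with hpmdef
      have hpmem := (Finset.univ.filter (fun p' : Fin m => x k (p' : ℕ) ≤ y)).max'_mem hP
      rw [Finset.mem_filter] at hpmem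
      refine ⟨pm, hpmem.2, ?_⟩
      by_cases hlast : (pm : ℕ) + 1 = m
      · rw [hlast, hxm k]; exact h1y
      · have hlt : (pm : ℕ) + 1 < m := by have := pm.isLt; omega
        by_contra hc
        push_neg at hc
        have hmemP : (⟨(pm : ℕ) + 1, hlt⟩ : Fin m) ∈
            Finset.univ.filter (fun p' : Fin m => x k (p' : ℕ) ≤ y) := by
          rw [Finset.mem_filter]
          exact ⟨Finset.mem_univ _, hc.le⟩
        have hle := Finset.le_max' _ _ hmemP
        rw [Fin.le_def] at hle
        simp only at hle
        omega
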